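/- Assume each A_k is invertible and each B_k has full column rank. Then there exists ε̄ > 0 such that for every temperature parameter ε with 0 < ε < ε̄, the matrix M̌_k is symmetric positive definite for every k = 0,…,T−1. (Note that Π̌_k and Π̂_k do not depend on ε, so only the last term of M̌_k depends on ε.) -/

import Mathlib

open Matrix Filter Topology

/-- The unique symmetric positive semidefinite square root of a positive
semidefinite real matrix (junk value `0` if the matrix is not PSD). -/
noncomputable def msqrt {d : ℕ} (X : Matrix (Fin d) (Fin d) ℝ) :
    Matrix (Fin d) (Fin d) ℝ :=
  letI := Classical.propDecidable X.PosSemidef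
  if h : X.PosSemidef then
    (h.1.eigenvectorUnitary : Matrix (Fin d) (Fin d) ℝ) *
      diagonal ((RCLike.ofReal : ℝ → ℝ) ∘ Real.sqrt ∘ h.1.eigenvalues) *
      (star h.1.eigenvectorUnitary : Matrix (Fin d) (Fin d) ℝ)
  else 0

/-- The Frobenius norm of a real square matrix. -/
noncomputable def frob {d : ℕ} (X : Matrix (Fin d) (Fin d) ℝ) : ℝ :=
  Real.sqrt (∑ i, ∑ j, X i j ^ 2)

/-- Data of the mutual information optimal control problem for a discrete-time
linear system `x_{k+1} = A_k x_k + B_k u_k + w_k`. -/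
structure LQData (n m : ℕ) where
  ε : ℝ
  A : ℕ → Matrix (Fin n) (Fin n) ℝ
  B : ℕ → Matrix (Fin n) (Fin m) ℝ
  R : ℕ → Matrix (Fin m) (Fin m) ℝ
  F : Matrix (Fin n) (Fin n) ℝ
  Sw : ℕ → Matrix (Fin n) (Fin n) ℝ
  Sini : Matrix (Fin n) (Fin n) ℝ

namespace LQData

variable {n m : ℕ} (P : LQData n m) (T : ℕ) (Srho : ℕ → Matrix (Fin m) (Fin m) ℝ)

/-- The backward Riccati recursion `Π_k` associated with the prior covariances
`Σ_{ρ_k}`: `Π_T = F` and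
`Π_k = A_kᵀ Π_{k+1} A_k − (1/ε) A_kᵀ Π_{k+1} B_k Σ^{1/2} (I + Σ^{1/2} C_k Σ^{1/2})⁻¹ Σ^{1/2} B_kᵀ Π_{k+1} A_k`
with `C_k = (R_k + B_kᵀ Π_{k+1} B_k)/ε`. -/
noncomputable def Ric (k : ℕ) : Matrix (Fin n) (Fin n) ℝ :=
  if h : T ≤ k then P.F
  else
    let Pk := Ric (k + 1)
    let S := msqrt (Srho k)
    let C := (1 / P.ε) • (P.R k + (P.B k)ᵀ * Pk * P.B k)
    (P.A k)ᵀ * Pk * P.A k -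
      (1 / P.ε) • ((P.A k)ᵀ * Pk * P.B k * S * (1 + S * C * S)⁻¹ * S * (P.B k)ᵀ * Pk * P.A k)
termination_by T - k
decreasing_by omega

/-- `C_k = (R_k + B_kᵀ Π_{k+1} B_k)/ε`. -/
noncomputable def Ck (k : ℕ) : Matrix (Fin m) (Fin m) ℝ :=
  (1 / P.ε) • (P.R k + (P.B k)ᵀ * P.Ric T Srho (k + 1) * P.B k)

/-- `Σ_{Q_k} = ε (R_k + B_kᵀ Π_{k+1} B_k)⁻¹`. -/
noncomputable def SigQ (k : ℕ) : Matrix (Fin m) (Fin m) ℝ :=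
  P.ε • (P.R k + (P.B k)ᵀ * P.Ric T Srho (k + 1) * P.B k)⁻¹

/-- Covariance `Σ_{π_k}` of the optimal policy for the fixed prior. -/
noncomputable def SigPi (k : ℕ) : Matrix (Fin m) (Fin m) ℝ :=
  msqrt (Srho k) * (1 + msqrt (Srho k) * P.Ck T Srho k * msqrt (Srho k))⁻¹ * msqrt (Srho k)

/-- Feedback gain `P_k = −(1/ε) Σ_{π_k} B_kᵀ Π_{k+1} A_k`. -/
noncomputable def Pgain (k : ℕ) : Matrix (Fin m) (Fin n) ℝ :=
  -((1 / P.ε) • (P.SigPi T Srho k * (P.B k)ᵀ * P.Ric T Srho (k + 1) * P.A k))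

/-- Forward state covariance recursion under the optimal policy. -/
noncomputable def Sigx : ℕ → Matrix (Fin n) (Fin n) ℝ
  | 0 => P.Sini
  | k + 1 =>
    (P.A k + P.B k * P.Pgain T Srho k) * Sigx k *
        (P.A k + P.B k * P.Pgain T Srho k)ᵀ +
      P.B k * P.SigPi T Srho k * (P.B k)ᵀ + P.Sw k

/-- The standard LQR Riccati recursion `Π̌_k`. -/
noncomputable def RicLQR (k : ℕ) : Matrix (Fin n) (Fin n) ℝ :=
  if h : T ≤ k then P.F
  else
    let Pk := RicLQR (k + 1)
    (P.A k)ᵀ * Pk * P.A k -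
      (P.A k)ᵀ * Pk * P.B k * (P.R k + (P.B k)ᵀ * Pk * P.B k)⁻¹ * (P.B k)ᵀ * Pk * P.A k
termination_by T - k
decreasing_by omega

/-- `Π̂_k = A_kᵀ ⋯ A_{T−1}ᵀ F A_{T−1} ⋯ A_k`. -/
noncomputable def RicHat (k : ℕ) : Matrix (Fin n) (Fin n) ℝ :=
  if h : T ≤ k then P.F
  else (P.A k)ᵀ * RicHat (k + 1) * P.A k
termination_by T - k
decreasing_by omega

/-- `Σ_{w_{k−1}}` with the convention `Σ_{w_{−1}} := Σ_{x_ini}`. -/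
noncomputable def Swm1 (k : ℕ) : Matrix (Fin n) (Fin n) ℝ :=
  if k = 0 then P.Sini else P.Sw (k - 1)

/-- The matrix `M̌_k` from the sufficient condition for stochastic optimal policies. -/
noncomputable def Mcheck (k : ℕ) : Matrix (Fin m) (Fin m) ℝ :=
  (P.R k + (P.B k)ᵀ * P.RicHat T (k + 1) * P.B k)⁻¹ *
      ((P.B k)ᵀ * P.RicLQR T (k + 1) * P.A k * P.Swm1 k * (P.A k)ᵀ *
        P.RicLQR T (k + 1) * P.B k) *
      (P.R k + (P.B k)ᵀ * P.RicHat T (k + 1) * P.B k)⁻¹ -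
    P.ε • (P.R k + (P.B k)ᵀ * P.RicLQR T (k + 1) * P.B k)⁻¹

/-- State covariance under the zero control input. -/
noncomputable def SigxZero : ℕ → Matrix (Fin n) (Fin n) ℝ
  | 0 => P.Sini
  | k + 1 => P.A k * SigxZero k * (P.A k)ᵀ + P.Sw k

/-- The matrix `M̂_k^zero` from the sufficient condition for deterministic optimal policies. -/
noncomputable def MhatZero (k : ℕ) : Matrix (Fin m) (Fin m) ℝ :=
  (P.R k + (P.B k)ᵀ * P.RicLQR T (k + 1) * P.B k)⁻¹ *
      ((P.B k)ᵀ * P.RicHat T (k + 1) * P.A k * P.SigxZero k * (P.A k)ᵀ *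
        P.RicHat T (k + 1) * P.B k) *
      (P.R k + (P.B k)ᵀ * P.RicLQR T (k + 1) * P.B k)⁻¹ -
    P.ε • (P.R k + (P.B k)ᵀ * P.RicHat T (k + 1) * P.B k)⁻¹


/-- The backward recursion `r_k` for the mean offset:
`r_T = 0` and `r_k = A_k⁻¹ r_{k+1} − Π_k⁻¹ A_kᵀ Π_{k+1} B_k (I + Σ_{ρ_k} C_k)⁻¹ μ_{ρ_k}`. -/
noncomputable def rvec (μ : ℕ → Fin m → ℝ) (k : ℕ) : Fin n → ℝ :=
  if h : T ≤ k then 0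
  else
    ((P.A k)⁻¹).mulVec (rvec μ (k + 1)) -
      ((P.Ric T Srho k)⁻¹ * ((P.A k)ᵀ * P.Ric T Srho (k + 1) * P.B k *
        (1 + Srho k * P.Ck T Srho k)⁻¹)).mulVec (μ k)
termination_by T - k
decreasing_by omega

/-- `Θ_k = ε C_k − ε C_k Σ_{π_k} C_k − (I − C_k Σ_{π_k}) B_kᵀ Π_{k+1} A_k Π_k⁻¹ A_kᵀ Π_{k+1} B_k (I − Σ_{π_k} C_k)`. -/
noncomputable def Theta (k : ℕ) : Matrix (Fin m) (Fin m) ℝ :=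
  P.ε • P.Ck T Srho k - P.ε • (P.Ck T Srho k * P.SigPi T Srho k * P.Ck T Srho k) -
    (1 - P.Ck T Srho k * P.SigPi T Srho k) *
      ((P.B k)ᵀ * P.Ric T Srho (k + 1) * P.A k * (P.Ric T Srho k)⁻¹ *
        ((P.A k)ᵀ * P.Ric T Srho (k + 1) * P.B k)) *
      (1 - P.SigPi T Srho k * P.Ck T Srho k)

end LQData

/-- Extend a `T`-tuple of matrices to a function on `ℕ` (by zero). -/
def extT {m : ℕ} (T : ℕ) (σ : Fin T → Matrix (Fin m) (Fin m) ℝ) :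
    ℕ → Matrix (Fin m) (Fin m) ℝ :=
  fun k => if h : k < T then σ ⟨k, h⟩ else 0


/-- Extend a `T`-tuple of vectors to a function on `ℕ` (by zero). -/
def extV {m : ℕ} (T : ℕ) (μ : Fin T → Fin m → ℝ) : ℕ → Fin m → ℝ :=
  fun k => if h : k < T then μ ⟨k, h⟩ else 0

namespace LQData

variable {n m : ℕ} (P : LQData n m) (T : ℕ)

/-- The reduced objective `J̌` as a function of the `T`-tuple of prior covariances. -/
noncomputable def Jcheck (σ : Fin T → Matrix (Fin m) (Fin m) ℝ) : ℝ :=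
  (1 / 2) * ((P.Ric T (extT T σ) 0 * P.Sini).trace +
    ∑ k : Fin T,
      (P.ε * Real.log ((extT T σ k + P.SigQ T (extT T σ) k).det / (P.SigQ T (extT T σ) k).det) +
        (P.Ric T (extT T σ) (k + 1) * P.Sw k).trace))

/-- `L_k = (Σ_{Q_k} + Σ_{ρ_k})⁻¹`. -/
noncomputable def Lmat (Srho : ℕ → Matrix (Fin m) (Fin m) ℝ) (k : ℕ) :
    Matrix (Fin m) (Fin m) ℝ :=
  (P.SigQ T Srho k + Srho k)⁻¹

/-- `E_k = (1/ε) Σ_{Q_k} B_kᵀ Π_{k+1} A_k`. -/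
noncomputable def Emat (Srho : ℕ → Matrix (Fin m) (Fin m) ℝ) (k : ℕ) :
    Matrix (Fin m) (Fin n) ℝ :=
  (1 / P.ε) • (P.SigQ T Srho k * (P.B k)ᵀ * P.Ric T Srho (k + 1) * P.A k)

/-- `J̌'_k = (ε/2) L_k (Σ_{ρ_k} + Σ_{Q_k} − E_k Σ_{x_k} E_kᵀ) L_k`. -/
noncomputable def Jprime (Srho : ℕ → Matrix (Fin m) (Fin m) ℝ) (k : ℕ) :
    Matrix (Fin m) (Fin m) ℝ :=
  (P.ε / 2) • (P.Lmat T Srho k *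
    (Srho k + P.SigQ T Srho k - P.Emat T Srho k * P.Sigx T Srho k * (P.Emat T Srho k)ᵀ) *
    P.Lmat T Srho k)

/-- The alternating-optimization update map `𝒯` on `T`-tuples of prior covariances:
`𝒯(σ)_k = Σ_{π_k} + P_k Σ_{x_k} P_kᵀ`. -/
noncomputable def Tmap (σ : Fin T → Matrix (Fin m) (Fin m) ℝ) :
    Fin T → Matrix (Fin m) (Fin m) ℝ :=
  fun k =>
    P.SigPi T (extT T σ) k +
      P.Pgain T (extT T σ) k * P.Sigx T (extT T σ) k * (P.Pgain T (extT T σ) k)ᵀ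

/-- The objective `J` as a function of the prior means, for fixed prior covariances:
`J(μ) = (1/2)( r_0ᵀ Π_0 r_0 + Σ_k μ_{ρ_k}ᵀ Θ_k μ_{ρ_k} )`. -/
noncomputable def Jmean (Srho : ℕ → Matrix (Fin m) (Fin m) ℝ) (μ : Fin T → Fin m → ℝ) : ℝ :=
  (1 / 2) *
    (P.rvec T Srho (extV T μ) 0 ⬝ᵥ (P.Ric T Srho 0).mulVec (P.rvec T Srho (extV T μ) 0) +
      ∑ k : Fin T, μ k ⬝ᵥ (P.Theta T Srho k).mulVec (μ k))

end LQData

open Matrix Filter Topology LQData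


section Aux

variable {d e : ℕ}

lemma myPosDef_conj {D : Matrix (Fin d) (Fin d) ℝ} (hD : D.PosDef)
    (C : Matrix (Fin d) (Fin e) ℝ) (hC : Function.Injective C.mulVec) :
    (Cᵀ * D * C).PosDef := by
  rw [Matrix.posDef_iff_dotProduct_mulVec]
  constructor
  · have h := Matrix.isHermitian_conjTranspose_mul_mul C hD.1
    rwa [Matrix.conjTranspose_eq_transpose_of_trivial] at h
  · intro x hx
    have hx' : C *ᵥ x ≠ 0 := by
      intro h
      exact hx (hC (by simpa using h))
    have := hD.dotProduct_mulVec_pos hx'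
    rw [← Matrix.mulVec_mulVec, ← Matrix.mulVec_mulVec, Matrix.dotProduct_mulVec,
      Matrix.vecMul_transpose]
    simpa only [star_trivial] using this

lemma myPosDef_conj' {D : Matrix (Fin d) (Fin d) ℝ} (hD : D.PosDef)
    (C : Matrix (Fin e) (Fin d) ℝ) (hCt : Cᵀ.mulVec.Injective) :
    (C * D * Cᵀ).PosDef := by
  simpa using myPosDef_conj hD Cᵀ hCt

lemma transpose_psd_conj {nn mm : ℕ} {Pi : Matrix (Fin nn) (Fin nn) ℝ}
    (hPi : Pi.PosSemidef) (B : Matrix (Fin nn) (Fin mm) ℝ) :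
    (Bᵀ * Pi * B).PosSemidef := by
  have := hPi.conjTranspose_mul_mul_same B
  rwa [Matrix.conjTranspose_eq_transpose_of_trivial] at this

lemma riccati_step_posDef {nn mm : ℕ} {Pi : Matrix (Fin nn) (Fin nn) ℝ}
    {R : Matrix (Fin mm) (Fin mm) ℝ} (B : Matrix (Fin nn) (Fin mm) ℝ)
    (hPi : Pi.PosDef) (hR : R.PosDef) :
    (Pi - Pi * B * (R + Bᵀ * Pi * B)⁻¹ * Bᵀ * Pi).PosDef := by
  have hRinv := hR.inv
  have hBRB : (B * R⁻¹ * Bᵀ).PosSemidef := by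
    have := hRinv.posSemidef.mul_mul_conjTranspose_same B
    rwa [Matrix.conjTranspose_eq_transpose_of_trivial] at this
  have hX : (Pi⁻¹ + B * R⁻¹ * Bᵀ).PosDef := hPi.inv.add_posSemidef hBRB
  have hN : (R + Bᵀ * Pi * B).PosDef :=
    hR.add_posSemidef (transpose_psd_conj hPi.posSemidef B)
  have h1 : (Pi⁻¹)⁻¹ = Pi :=
    Matrix.nonsing_inv_nonsing_inv _ (Matrix.isUnit_iff_isUnit_det _ |>.mp hPi.isUnit)
  have h2 : (R⁻¹)⁻¹ = R :=
    Matrix.nonsing_inv_nonsing_inv _ (Matrix.isUnit_iff_isUnit_det _ |>.mp hR.isUnit)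
  have key : (Pi⁻¹ + B * R⁻¹ * Bᵀ)⁻¹ = Pi - Pi * B * (R + Bᵀ * Pi * B)⁻¹ * Bᵀ * Pi := by
    rw [Matrix.add_mul_mul_inv_eq_sub Pi⁻¹ B R⁻¹ Bᵀ hPi.inv.isUnit hRinv.isUnit
      (by rw [h1, h2]; exact hN.isUnit), h1, h2]
  rw [← key]; exact hX.inv

lemma quad_smul {dd : ℕ} (M : Matrix (Fin dd) (Fin dd) ℝ) (t : ℝ) (x : Fin dd → ℝ) :
    (t • x) ⬝ᵥ M *ᵥ (t • x) = t * t * (x ⬝ᵥ M *ᵥ x) := by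
  rw [Matrix.mulVec_smul, smul_dotProduct, dotProduct_smul]
  ring_nf

lemma exists_eps_posDef {dd : ℕ} (hd : 0 < dd) (G H : Matrix (Fin dd) (Fin dd) ℝ)
    (hG : G.PosDef) (hH : H.IsHermitian) :
    ∃ e : ℝ, 0 < e ∧ ∀ ε : ℝ, 0 < ε → ε < e → (G - ε • H).PosDef := by
  haveI : Nonempty (Fin dd) := ⟨⟨0, hd⟩⟩
  have hcont : ∀ M : Matrix (Fin dd) (Fin dd) ℝ,
      Continuous fun x : Fin dd → ℝ => x ⬝ᵥ M *ᵥ x := by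
    intro M
    simp only [Matrix.mulVec, dotProduct]
    fun_prop
  have hScomp : IsCompact (Metric.sphere (0 : Fin dd → ℝ) 1) := isCompact_sphere 0 1
  have hSne : (Metric.sphere (0 : Fin dd → ℝ) 1).Nonempty :=
    NormedSpace.sphere_nonempty.mpr zero_le_one
  obtain ⟨a, haS, ha⟩ := hScomp.exists_isMinOn hSne ((hcont G).continuousOn)
  obtain ⟨b, hbS, hb⟩ := hScomp.exists_isMaxOn hSne ((hcont H).continuousOn)
  set c : ℝ := a ⬝ᵥ G *ᵥ a with hc
  set d : ℝ := b ⬝ᵥ H *ᵥ b with hdd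
  have hc0 : 0 < c := by
    have ha0 : a ≠ 0 := by
      intro h; rw [Metric.mem_sphere, h] at haS; simp at haS
    simpa using hG.dotProduct_mulVec_pos ha0
  refine ⟨c / max d 1, div_pos hc0 (lt_max_of_lt_right one_pos), ?_⟩
  intro ε hε hεe
  rw [Matrix.posDef_iff_dotProduct_mulVec]
  constructor
  · have hHt : Hᵀ = H := by
      rw [← Matrix.conjTranspose_eq_transpose_of_trivial]; exact hH.eq
    show (G - ε • H)ᴴ = G - ε • H
    rw [Matrix.conjTranspose_eq_transpose_of_trivial, Matrix.transpose_sub,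
      Matrix.transpose_smul, hHt]
    congr 1
    rw [← Matrix.conjTranspose_eq_transpose_of_trivial]; exact hG.1.eq
  · intro x hx
    set t : ℝ := ‖x‖ with ht
    have ht0 : 0 < t := norm_pos_iff.mpr hx
    set y : Fin dd → ℝ := t⁻¹ • x with hy
    have hyS : y ∈ Metric.sphere (0 : Fin dd → ℝ) 1 := by
      rw [mem_sphere_zero_iff_norm, hy, norm_smul, norm_inv, ht, norm_norm]
      exact inv_mul_cancel₀ (norm_ne_zero_iff.mpr hx)
    have hxy : x = t • y := by rw [hy, smul_inv_smul₀ ht0.ne']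
    have hGy : c ≤ y ⬝ᵥ G *ᵥ y := ha hyS
    have hHy' : y ⬝ᵥ H *ᵥ y ≤ d := hb hyS
    have hεd : ε * (y ⬝ᵥ H *ᵥ y) < c := by
      calc ε * (y ⬝ᵥ H *ᵥ y) ≤ ε * max d 1 :=
            mul_le_mul_of_nonneg_left (hHy'.trans (le_max_left _ _)) hε.le
        _ < c := (lt_div_iff₀ (lt_max_of_lt_right one_pos)).mp hεe
    have hquad : x ⬝ᵥ (G - ε • H) *ᵥ x = t * t * (y ⬝ᵥ G *ᵥ y - ε * (y ⬝ᵥ H *ᵥ y)) := by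
      rw [hxy, Matrix.sub_mulVec, dotProduct_sub, quad_smul]
      rw [show (ε • H) *ᵥ (t • y) = t • ((ε • H) *ᵥ y) from Matrix.mulVec_smul _ _ _,
        smul_dotProduct, dotProduct_smul, Matrix.smul_mulVec,
        dotProduct_smul]
      simp [smul_eq_mul]; ring
    rw [show star x = x from star_trivial x, hquad]
    have : 0 < y ⬝ᵥ G *ᵥ y - ε * (y ⬝ᵥ H *ᵥ y) := by linarith
    positivity


lemma ricLQR_ext {n m : ℕ} (P : LQData n m) (εx : ℝ) (T : ℕ) :
    ∀ k, ({P with ε := εx} : LQData n m).RicLQR T k = P.RicLQR T k := by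
  suffices h : ∀ j k, T - k ≤ j →
      ({P with ε := εx} : LQData n m).RicLQR T k = P.RicLQR T k by
    intro k; exact h (T - k) k le_rfl
  intro j
  induction j with
  | zero =>
    intro k hk
    have hTk : T ≤ k := by omega
    conv_lhs => rw [LQData.RicLQR]
    conv_rhs => rw [LQData.RicLQR]
    simp [hTk]
  | succ j ih =>
    intro k hk
    conv_lhs => rw [LQData.RicLQR]
    conv_rhs => rw [LQData.RicLQR]
    by_cases h : T ≤ k
    · simp [h]
    · simp only [h, dite_false]
      rw [ih (k + 1) (by omega)]

lemma ricHat_ext {n m : ℕ} (P : LQData n m) (εx : ℝ) (T : ℕ) :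
    ∀ k, ({P with ε := εx} : LQData n m).RicHat T k = P.RicHat T k := by
  suffices h : ∀ j k, T - k ≤ j →
      ({P with ε := εx} : LQData n m).RicHat T k = P.RicHat T k by
    intro k; exact h (T - k) k le_rfl
  intro j
  induction j with
  | zero =>
    intro k hk
    have hTk : T ≤ k := by omega
    conv_lhs => rw [LQData.RicHat]
    conv_rhs => rw [LQData.RicHat]
    simp [hTk]
  | succ j ih =>
    intro k hk
    conv_lhs => rw [LQData.RicHat]
    conv_rhs => rw [LQData.RicHat]
    by_cases h : T ≤ k
    · simp [h]
    · simp only [h, dite_false]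
      rw [ih (k + 1) (by omega)]

lemma ricLQR_posDef {n m : ℕ} (P : LQData n m) (T : ℕ)
    (hR : ∀ k < T, (P.R k).PosDef) (hF : P.F.PosDef)
    (hA : ∀ k < T, IsUnit (P.A k)) :
    ∀ k, (P.RicLQR T k).PosDef := by
  suffices h : ∀ j k, T - k ≤ j → (P.RicLQR T k).PosDef by
    intro k; exact h (T - k) k le_rfl
  intro j
  induction j with
  | zero =>
    intro k hk
    rw [LQData.RicLQR]
    have : T ≤ k := by omega
    simp only [this, dite_true]
    exact hF
  | succ j ih =>
    intro k hk
    rw [LQData.RicLQR]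
    by_cases h : T ≤ k
    · simp only [h, dite_true]; exact hF
    · simp only [h, dite_false]
      push_neg at h
      have hPk : (P.RicLQR T (k + 1)).PosDef := ih (k + 1) (by omega)
      have hstep := riccati_step_posDef (P.B k) hPk (hR k h)
      have hAinj : Function.Injective (P.A k).mulVec :=
        Matrix.mulVec_injective_iff_isUnit.mpr (hA k h)
      have hEq : (P.A k)ᵀ * P.RicLQR T (k + 1) * P.A k -
          (P.A k)ᵀ * P.RicLQR T (k + 1) * P.B k *
            (P.R k + (P.B k)ᵀ * P.RicLQR T (k + 1) * P.B k)⁻¹ * (P.B k)ᵀ *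
            P.RicLQR T (k + 1) * P.A k =
          (P.A k)ᵀ * (P.RicLQR T (k + 1) -
            P.RicLQR T (k + 1) * P.B k *
              (P.R k + (P.B k)ᵀ * P.RicLQR T (k + 1) * P.B k)⁻¹ * (P.B k)ᵀ *
              P.RicLQR T (k + 1)) * P.A k := by
        simp only [Matrix.mul_sub, Matrix.sub_mul, Matrix.mul_assoc]
      rw [hEq]
      exact myPosDef_conj hstep (P.A k) hAinj

lemma ricHat_posDef {n m : ℕ} (P : LQData n m) (T : ℕ) (hF : P.F.PosDef)
    (hA : ∀ k < T, IsUnit (P.A k)) :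
    ∀ k, (P.RicHat T k).PosDef := by
  suffices h : ∀ j k, T - k ≤ j → (P.RicHat T k).PosDef by
    intro k; exact h (T - k) k le_rfl
  intro j
  induction j with
  | zero =>
    intro k hk
    rw [LQData.RicHat]
    have : T ≤ k := by omega
    simp only [this, dite_true]
    exact hF
  | succ j ih =>
    intro k hk
    rw [LQData.RicHat]
    by_cases h : T ≤ k
    · simp only [h, dite_true]; exact hF
    · simp only [h, dite_false]
      push_neg at h
      exact myPosDef_conj (ih (k + 1) (by omega)) (P.A k)
        (Matrix.mulVec_injective_iff_isUnit.mpr (hA k h))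

end Aux

theorem mcheck_posDef_small_eps {n m : ℕ} (hn : 1 ≤ n) (hm : 1 ≤ m) (T : ℕ) (hT : 1 ≤ T)
    (P : LQData n m)
    (hA : ∀ k < T, IsUnit (P.A k))
    (hB : ∀ k < T, Function.Injective (P.B k).mulVec)
    (hR : ∀ k < T, (P.R k).PosDef) (hSw : ∀ k < T, (P.Sw k).PosDef)
    (hF : P.F.PosDef) (hSini : P.Sini.PosDef) :
    ∃ εbar : ℝ, 0 < εbar ∧ ∀ ε : ℝ, 0 < ε → ε < εbar →
      ∀ k < T, (({ P with ε := ε } : LQData n m).Mcheck T k).PosDef := by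
  classical
  have hPiL : ∀ k, (P.RicLQR T k).PosDef := ricLQR_posDef P T hR hF hA
  have hPih : ∀ k, (P.RicHat T k).PosDef := ricHat_posDef P T hF hA
  have hex : ∀ k : Fin T, ∃ e : ℝ, 0 < e ∧ ∀ ε : ℝ, 0 < ε → ε < e →
      (({ P with ε := ε } : LQData n m).Mcheck T (k : ℕ)).PosDef := by
    intro ⟨k, hk⟩
    simp only
    -- notation
    set Pic := P.RicLQR T (k + 1) with hPic
    set Pih := P.RicHat T (k + 1) with hPihdef
    set N := P.R k + (P.B k)ᵀ * Pih * P.B k with hNdef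
    set Nc := P.R k + (P.B k)ᵀ * Pic * P.B k with hNcdef
    have hPicPD : Pic.PosDef := hPiL (k + 1)
    have hPihPD : Pih.PosDef := hPih (k + 1)
    have hN : N.PosDef := (hR k hk).add_posSemidef (transpose_psd_conj hPihPD.posSemidef (P.B k))
    have hNc : Nc.PosDef := (hR k hk).add_posSemidef (transpose_psd_conj hPicPD.posSemidef (P.B k))
    have hSig : (P.Swm1 k).PosDef := by
      unfold LQData.Swm1
      by_cases h0 : k = 0
      · simp [h0, hSini]
      · simp only [h0, if_false]
        exact hSw (k - 1) (by omega)
    set C := (P.A k)ᵀ * Pic * P.B k with hCdef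
    have hPisym : Picᵀ = Pic := by
      rw [← Matrix.conjTranspose_eq_transpose_of_trivial]; exact hPicPD.1.eq
    have hCt : Cᵀ = (P.B k)ᵀ * Pic * P.A k := by
      rw [hCdef, Matrix.transpose_mul, Matrix.transpose_mul, Matrix.transpose_transpose,
        hPisym, Matrix.mul_assoc]
    have hCinj : Function.Injective C.mulVec := by
      have hU : IsUnit ((P.A k)ᵀ * Pic) := by
        rw [Matrix.isUnit_iff_isUnit_det, Matrix.det_mul, Matrix.det_transpose]
        exact ((Matrix.isUnit_iff_isUnit_det _).mp (hA k hk)).mul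
          ((Matrix.isUnit_iff_isUnit_det _).mp hPicPD.isUnit)
      have hcomp : C.mulVec = ((P.A k)ᵀ * Pic).mulVec ∘ (P.B k).mulVec := by
        funext x; simp [hCdef, Matrix.mulVec_mulVec]
      rw [hcomp]
      exact (Matrix.mulVec_injective_iff_isUnit.mpr hU).comp (hB k hk)
    have hmidPD : (Cᵀ * P.Swm1 k * C).PosDef := myPosDef_conj hSig C hCinj
    have hmidEq : (P.B k)ᵀ * Pic * P.A k * P.Swm1 k * (P.A k)ᵀ * Pic * P.B k
        = Cᵀ * P.Swm1 k * C := by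
      rw [hCt, hCdef]
      simp only [Matrix.mul_assoc]
    have hNinvsym : (N⁻¹)ᵀ = N⁻¹ := by
      rw [← Matrix.conjTranspose_eq_transpose_of_trivial]; exact hN.inv.1.eq
    have hNinj : Function.Injective (N⁻¹).mulVec :=
      Matrix.mulVec_injective_iff_isUnit.mpr hN.inv.isUnit
    have hGPD : (N⁻¹ * ((P.B k)ᵀ * Pic * P.A k * P.Swm1 k * (P.A k)ᵀ * Pic * P.B k) * N⁻¹).PosDef := by
      rw [hmidEq]
      nth_rewrite 1 [← hNinvsym]
      exact myPosDef_conj hmidPD N⁻¹ hNinj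
    obtain ⟨e, he, hprop⟩ := exists_eps_posDef hm _ _ hGPD hNc.inv.1
    refine ⟨e, he, ?_⟩
    intro ε hε hεe
    have hM : ({ P with ε := ε } : LQData n m).Mcheck T k =
        N⁻¹ * ((P.B k)ᵀ * Pic * P.A k * P.Swm1 k * (P.A k)ᵀ * Pic * P.B k) * N⁻¹ - ε • Nc⁻¹ := by
      unfold LQData.Mcheck
      simp only [ricLQR_ext, ricHat_ext]
      rfl
    rw [hM]
    exact hprop ε hε hεe
  choose e he hprop using hex
  have hne : (Finset.univ : Finset (Fin T)).Nonempty := ⟨⟨0, hT⟩, Finset.mem_univ _⟩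
  refine ⟨Finset.univ.inf' hne e, ?_, ?_⟩
  · rw [Finset.lt_inf'_iff]
    intro k _
    exact he k
  · intro ε hε hεbar k hk
    have hlt : ε < e ⟨k, hk⟩ :=
      lt_of_lt_of_le hεbar (Finset.inf'_le _ (Finset.mem_univ _))
    exact hprop ⟨k, hk⟩ ε hε hlt
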